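/- arXiv:2304.03097 — 5 statements merged into one kernel-verified Lean document; each statement's English description precedes it below -/
import Mathlib

section
/- If S is a thickly syndetic subset of the integers and p_1,...,p_d are polynomials with integer coefficients satisfying p_i(0)=0, then the set {(m,n) ∈ ℤ² : m+p_1(n), m+p_2(n), ..., m+p_d(n) ∈ S} is thickly syndetic in ℤ². -/
/-- A subset of ℤ is syndetic if it has bounded gaps. -/
def Syndetic (S : Set ℤ) : Prop :=
  ∃ N : ℕ, ∀ m : ℤ, ∃ i : ℕ, i ≤ N ∧ m + i ∈ S

/-- A subset of ℤ is thickly syndetic if for every N, the set of starting positions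
of runs of N consecutive integers contained in S is syndetic. -/
def ThicklySyndetic (S : Set ℤ) : Prop :=
  ∀ N : ℕ, Syndetic {m : ℤ | ∀ i : ℕ, i < N → m + i ∈ S}

/-- A subset of ℤ² is syndetic if finitely many translates of it cover ℤ². -/
def Syndetic2 (S : Set (ℤ × ℤ)) : Prop :=
  ∃ F : Finset (ℤ × ℤ), ∀ v : ℤ × ℤ, ∃ e ∈ F, v + e ∈ S

/-- A subset of ℤ² is thickly syndetic if for every N, the set of positions where an
N × N block contained in S begins is syndetic in ℤ². -/
def ThicklySyndetic2 (S : Set (ℤ × ℤ)) : Prop :=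
  ∀ N : ℕ, Syndetic2 {v : ℤ × ℤ | ∀ i j : ℕ, i < N → j < N → (v.1 + i, v.2 + j) ∈ S}

/-- Uniform simultaneous runs: for a thickly syndetic set `S` and any number `r` of
shifts, there is a constant `C` (independent of the shifts themselves!) such that for
any shifts `a : Fin r → ℤ` and any `m`, some `e ≤ C` gives runs of length `N` of `S`
starting at all points `m + e + a k`. -/
lemma key_uniform_runs (S : Set ℤ) (hS : ThicklySyndetic S) :
    ∀ r N : ℕ, ∃ C : ℕ, ∀ a : Fin r → ℤ, ∀ m : ℤ,
      ∃ e : ℕ, e ≤ C ∧ ∀ k : Fin r, ∀ i : ℕ, i < N → m + e + a k + i ∈ S := by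
  intro r
  induction r with
  | zero => exact fun N => ⟨0, fun a m => ⟨0, le_refl 0, fun k => k.elim0⟩⟩
  | succ r ih =>
    intro N
    obtain ⟨g, hg⟩ := hS N
    obtain ⟨C, hC⟩ := ih (N + g)
    refine ⟨C + g, fun a m => ?_⟩
    obtain ⟨e, he, hrun⟩ := hC (fun k => a k.castSucc) m
    obtain ⟨f, hf, hf2⟩ := hg (m + e + a (Fin.last r))
    refine ⟨e + f, by omega, fun k i hi => ?_⟩
    induction k using Fin.lastCases with
    | last =>
      have h := hf2 i hi
      convert h using 1
      push_cast
      ring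
    | cast k =>
      have h := hrun k (f + i) (by omega)
      convert h using 1
      push_cast
      ring

theorem thicklySyndetic_polynomial (S : Set ℤ) (hS : ThicklySyndetic S)
    (d : ℕ) (p : Fin d → Polynomial ℤ) (hp : ∀ i, (p i).eval 0 = 0) :
    ThicklySyndetic2 {mn : ℤ × ℤ | ∀ i : Fin d, mn.1 + (p i).eval mn.2 ∈ S} := by
  intro N
  obtain ⟨C, hC⟩ := key_uniform_runs S hS (d * N) N
  refine ⟨(Finset.range (C + 1)).image (fun e : ℕ => ((e : ℤ), (0 : ℤ))), ?_⟩
  rintro ⟨m, n⟩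
  obtain ⟨e, he, hrun⟩ := hC
    (fun k => (p (finProdFinEquiv.symm k).1).eval (n + ((finProdFinEquiv.symm k).2 : ℤ))) m
  refine ⟨((e : ℤ), 0), Finset.mem_image.2 ⟨e, Finset.mem_range.2 (by omega), rfl⟩, ?_⟩
  intro i j hi hj k
  have h := hrun (finProdFinEquiv (k, ⟨j, hj⟩)) i hi
  rw [Equiv.symm_apply_apply] at h
  simp only [Set.mem_setOf_eq, Prod.mk_add_mk, add_zero] at h ⊢
  convert h using 1
  push_cast
  ring
end

section
/- Let (X, ⟨T,S⟩) be a ℤ²-action topological dynamical system on a compact metric space with commuting homeomorphisms T and S. If x is a transitive point for the ℤ²-action and K is the unique minimal subset of X, then for every open neighborhood U of K, the set N(x,U) = {(m,n) ∈ ℤ² : Tᵐ Sⁿ x ∈ U} is thickly syndetic in ℤ². -/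
variable {X : Type*} [MetricSpace X] [CompactSpace X]

/-- A set is invariant under the ℤ²-action generated by the homeomorphisms T and S. -/
def Invariant2 (T S : X ≃ₜ X) (K : Set X) : Prop :=
  (∀ y ∈ K, T y ∈ K) ∧ (∀ y ∈ K, T.symm y ∈ K) ∧
  (∀ y ∈ K, S y ∈ K) ∧ (∀ y ∈ K, S.symm y ∈ K)

/-- A minimal subset for the ℤ²-action generated by T and S. -/
def IsMinimal2 (T S : X ≃ₜ X) (K : Set X) : Prop :=
  K.Nonempty ∧ IsClosed K ∧ Invariant2 T S K ∧
    ∀ K' ⊆ K, K'.Nonempty → IsClosed K' → Invariant2 T S K' → K' = K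

set_option linter.unusedSectionVars false

/-- The ℤ²-action map. -/
private def TSphi (T S : X ≃ₜ X) (v : ℤ × ℤ) (y : X) : X :=
  (T.toEquiv ^ v.1) ((S.toEquiv ^ v.2) y)

private lemma cont_pow (T : X ≃ₜ X) (n : ℕ) :
    Continuous fun y => (T.toEquiv ^ n) y := by
  induction n with
  | zero => simpa using continuous_id'
  | succ n ih =>
    have h : ∀ y, (T.toEquiv ^ (n + 1)) y = (T.toEquiv ^ n) (T y) := by
      intro y; rw [pow_succ, Equiv.Perm.mul_apply]; rfl
    simp only [h]
    exact ih.comp T.continuous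

private lemma cont_zpow (T : X ≃ₜ X) (m : ℤ) :
    Continuous fun y => (T.toEquiv ^ m) y := by
  cases m with
  | ofNat n => simpa [zpow_natCast] using cont_pow T n
  | negSucc n =>
    have h : T.toEquiv ^ (Int.negSucc n) = T.symm.toEquiv ^ (n + 1) := by
      rw [zpow_negSucc, ← inv_pow]; rfl
    rw [h]
    exact cont_pow T.symm (n + 1)

private lemma cont_TSphi (T S : X ≃ₜ X) (v : ℤ × ℤ) : Continuous (TSphi T S v) :=
  (cont_zpow T v.1).comp (cont_zpow S v.2)

private lemma TSphi_comp (T S : X ≃ₜ X) (hc : Commute T.toEquiv S.toEquiv)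
    (v w : ℤ × ℤ) (y : X) : TSphi T S v (TSphi T S w y) = TSphi T S (v + w) y := by
  have hcom : S.toEquiv ^ v.2 * T.toEquiv ^ w.1 = T.toEquiv ^ w.1 * S.toEquiv ^ v.2 :=
    ((hc.zpow_zpow w.1 v.2).eq).symm
  simp only [TSphi, Prod.fst_add, Prod.snd_add]
  rw [zpow_add, zpow_add, Equiv.Perm.mul_apply, Equiv.Perm.mul_apply]
  congr 1
  calc (S.toEquiv ^ v.2) ((T.toEquiv ^ w.1) ((S.toEquiv ^ w.2) y))
      = (S.toEquiv ^ v.2 * T.toEquiv ^ w.1) ((S.toEquiv ^ w.2) y) := rfl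
    _ = (T.toEquiv ^ w.1 * S.toEquiv ^ v.2) ((S.toEquiv ^ w.2) y) := by rw [hcom]
    _ = (T.toEquiv ^ w.1) ((S.toEquiv ^ v.2) ((S.toEquiv ^ w.2) y)) := rfl

private lemma TSphi_T (T S : X ≃ₜ X) (z : X) : TSphi T S (1, 0) z = T z := by
  simp [TSphi]

private lemma TSphi_Tsymm (T S : X ≃ₜ X) (z : X) : TSphi T S (-1, 0) z = T.symm z := by
  simp [TSphi, zpow_neg, zpow_one]

private lemma TSphi_S (T S : X ≃ₜ X) (z : X) : TSphi T S (0, 1) z = S z := by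
  simp [TSphi]

private lemma TSphi_Ssymm (T S : X ≃ₜ X) (z : X) : TSphi T S (0, -1) z = S.symm z := by
  simp [TSphi, zpow_neg, zpow_one]

/-- The unique minimal set is contained in every orbit closure. -/
private lemma K_subset_closure (T S : X ≃ₜ X) (hc : Commute T.toEquiv S.toEquiv)
    (K : Set X) (huniq : ∀ K' : Set X, IsMinimal2 T S K' → K' = K) (y : X) :
    K ⊆ closure (Set.range fun v => TSphi T S v y) := by
  set O : Set X := Set.range fun v => TSphi T S v y with hO
  set Y : Set X := closure O with hY
  have hmaps : ∀ v : ℤ × ℤ, ∀ z ∈ Y, TSphi T S v z ∈ Y := by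
    intro v z hz
    have h1 : TSphi T S v '' O ⊆ O := by
      rintro _ ⟨_, ⟨w, rfl⟩, rfl⟩
      exact ⟨v + w, (TSphi_comp T S hc v w y).symm⟩
    have h2 : TSphi T S v z ∈ closure (TSphi T S v '' O) :=
      image_closure_subset_closure_image (cont_TSphi T S v) ⟨z, hz, rfl⟩
    exact closure_mono h1 h2
  have hYne : Y.Nonempty := ⟨y, subset_closure ⟨(0, 0), by simp [TSphi]⟩⟩
  have hYcl : IsClosed Y := isClosed_closure
  have hYinv : Invariant2 T S Y := by
    refine ⟨fun z hz => ?_, fun z hz => ?_, fun z hz => ?_, fun z hz => ?_⟩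
    · rw [← TSphi_T T S z]; exact hmaps (1, 0) z hz
    · rw [← TSphi_Tsymm T S z]; exact hmaps (-1, 0) z hz
    · rw [← TSphi_S T S z]; exact hmaps (0, 1) z hz
    · rw [← TSphi_Ssymm T S z]; exact hmaps (0, -1) z hz
  -- Zorn's lemma on nonempty closed invariant subsets of Y
  set 𝒮 : Set (Set X) := {A | A ⊆ Y ∧ A.Nonempty ∧ IsClosed A ∧ Invariant2 T S A} with h𝒮
  have hYmem : Y ∈ 𝒮 := ⟨le_refl _, hYne, hYcl, hYinv⟩
  obtain ⟨m, hmY, hmmem, hmin⟩ : ∃ m, m ⊆ Y ∧ Minimal (· ∈ 𝒮) m := by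
    apply zorn_superset_nonempty
    · intro c hc𝒮 hchain hcne
      refine ⟨⋂₀ c, ⟨?_, ?_, ?_, ?_⟩, fun s hs => Set.sInter_subset_of_mem hs⟩
      · obtain ⟨s, hs⟩ := hcne
        exact (Set.sInter_subset_of_mem hs).trans (hc𝒮 hs).1
      · haveI : Nonempty c := hcne.to_subtype
        exact IsCompact.nonempty_sInter_of_directed_nonempty_isCompact_isClosed
          (fun a ha b hb => by
            rcases eq_or_ne a b with rfl | hne
            · exact ⟨a, ha, subset_rfl, subset_rfl⟩
            · rcases hchain ha hb hne with h | h
              · exact ⟨a, ha, subset_rfl, h⟩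
              · exact ⟨b, hb, h, subset_rfl⟩) (fun s hs => (hc𝒮 hs).2.1)
          (fun s hs => (hc𝒮 hs).2.2.1.isCompact) (fun s hs => (hc𝒮 hs).2.2.1)
      · exact isClosed_sInter fun s hs => (hc𝒮 hs).2.2.1
      · refine ⟨fun z hz => ?_, fun z hz => ?_, fun z hz => ?_, fun z hz => ?_⟩ <;>
          [exact Set.mem_sInter.2 fun s hs =>
            (hc𝒮 hs).2.2.2.1 z (Set.mem_sInter.1 hz s hs);
           exact Set.mem_sInter.2 fun s hs =>
            (hc𝒮 hs).2.2.2.2.1 z (Set.mem_sInter.1 hz s hs);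
           exact Set.mem_sInter.2 fun s hs =>
            (hc𝒮 hs).2.2.2.2.2.1 z (Set.mem_sInter.1 hz s hs);
           exact Set.mem_sInter.2 fun s hs =>
            (hc𝒮 hs).2.2.2.2.2.2 z (Set.mem_sInter.1 hz s hs)]
    · exact hYmem
  have hmMin : IsMinimal2 T S m := by
    refine ⟨hmmem.2.1, hmmem.2.2.1, hmmem.2.2.2, fun K' hK'm hK'ne hK'cl hK'inv => ?_⟩
    have hK'𝒮 : K' ∈ 𝒮 := ⟨hK'm.trans hmmem.1, hK'ne, hK'cl, hK'inv⟩
    exact subset_antisymm hK'm (hmin hK'𝒮 hK'm)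
  have : m = K := huniq m hmMin
  rw [← this]
  exact hmY

/-- Visits to any open neighborhood of the unique minimal set are syndetic. -/
private lemma syndetic_aux (T S : X ≃ₜ X) (hc : Commute T.toEquiv S.toEquiv)
    (K : Set X) (hKne : K.Nonempty)
    (huniq : ∀ K' : Set X, IsMinimal2 T S K' → K' = K)
    (x : X) (V : Set X) (hV : IsOpen V) (hKV : K ⊆ V) :
    Syndetic2 {v : ℤ × ℤ | TSphi T S v x ∈ V} := by
  have hcov : (Set.univ : Set X) ⊆ ⋃ v : ℤ × ℤ, TSphi T S v ⁻¹' V := by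
    intro y _
    obtain ⟨k, hk⟩ := hKne
    have hkY : k ∈ closure (Set.range fun v => TSphi T S v y) :=
      K_subset_closure T S hc K huniq y hk
    obtain ⟨z, hzV, hzO⟩ := mem_closure_iff.1 hkY V hV (hKV hk)
    obtain ⟨v, rfl⟩ := hzO
    exact Set.mem_iUnion.2 ⟨v, hzV⟩
  obtain ⟨t, ht⟩ := isCompact_univ.elim_finite_subcover _
    (fun v : ℤ × ℤ => hV.preimage (cont_TSphi T S v)) hcov
  refine ⟨t, fun v => ?_⟩
  obtain ⟨e, het, he⟩ := Set.mem_iUnion₂.1 (ht (Set.mem_univ (TSphi T S v x)))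
  refine ⟨e, het, ?_⟩
  have h1 : TSphi T S e (TSphi T S v x) ∈ V := he
  rw [TSphi_comp T S hc, add_comm e v] at h1
  exact h1

private lemma pow_mem_of_forward {T : X ≃ₜ X} {K : Set X}
    (hT : ∀ y ∈ K, T y ∈ K) (n : ℕ) : ∀ k ∈ K, (T.toEquiv ^ (n : ℤ)) k ∈ K := by
  rw [zpow_natCast]
  induction n with
  | zero => intro k hk; simpa using hk
  | succ n ih =>
    intro k hk
    have h : (T.toEquiv ^ (n + 1)) k = (T.toEquiv ^ n) (T k) := by
      rw [pow_succ, Equiv.Perm.mul_apply]; rfl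
    rw [h]
    exact ih (T k) (hT k hk)

/-- If x is a transitive point of the ℤ²-system generated by commuting homeomorphisms
T and S, and K is the unique minimal subset, then for every open neighborhood U of K,
the set of (m,n) with TᵐSⁿx ∈ U is thickly syndetic in ℤ². -/
theorem thicklySyndetic_of_unique_minimal (T S : X ≃ₜ X)
    (hcomm : ∀ y : X, T (S y) = S (T y)) (x : X)
    (hx : Dense {y : X | ∃ m n : ℤ, y = (T.toEquiv ^ m) ((S.toEquiv ^ n) x)})
    (K : Set X) (hK : IsMinimal2 T S K) (huniq : ∀ K' : Set X, IsMinimal2 T S K' → K' = K)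
    (U : Set X) (hU : IsOpen U) (hKU : K ⊆ U) :
    ThicklySyndetic2 {mn : ℤ × ℤ | (T.toEquiv ^ mn.1) ((S.toEquiv ^ mn.2) x) ∈ U} := by
  have hc : Commute T.toEquiv S.toEquiv := by
    apply Equiv.ext
    intro y
    simpa using hcomm y
  intro N
  set V : Set X := {y | ∀ i j : ℕ, i < N → j < N → TSphi T S ((i : ℤ), (j : ℤ)) y ∈ U}
    with hVdef
  have hVopen : IsOpen V := by
    have hEq : V = ⋂ i : Fin N, ⋂ j : Fin N,
        TSphi T S (((i : ℕ) : ℤ), ((j : ℕ) : ℤ)) ⁻¹' U := by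
      ext z
      simp only [hVdef, Set.mem_setOf_eq, Set.mem_iInter, Set.mem_preimage]
      exact ⟨fun h i j => h i j i.2 j.2, fun h i j hi hj => h ⟨i, hi⟩ ⟨j, hj⟩⟩
    rw [hEq]
    exact isOpen_iInter_of_finite fun i =>
      isOpen_iInter_of_finite fun j => hU.preimage (cont_TSphi T S _)
  have hKV : K ⊆ V := by
    intro k hk i j hi hj
    apply hKU
    have h1 : (S.toEquiv ^ (j : ℤ)) k ∈ K := pow_mem_of_forward hK.2.2.1.2.2.1 j k hk
    exact pow_mem_of_forward hK.2.2.1.1 i _ h1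
  obtain ⟨F, hF⟩ := syndetic_aux T S hc K hK.1 huniq x V hVopen hKV
  refine ⟨F, fun v => ?_⟩
  obtain ⟨e, heF, he⟩ := hF v
  refine ⟨e, heF, ?_⟩
  intro i j hi hj
  have h1 : TSphi T S ((i : ℤ), (j : ℤ)) (TSphi T S (v + e) x) ∈ U := he i j hi hj
  rw [TSphi_comp T S hc] at h1
  have h2 : (((i : ℤ), (j : ℤ)) + (v + e)) = ((v + e).1 + i, (v + e).2 + j) := by
    simp [Prod.ext_iff, add_comm]
  rw [h2] at h1
  exact h1
end

section
/- Let (X, ⟨T,S⟩) be a minimal ℤ²-action topological dynamical system on a compact metric space, where T and S are commuting homeomorphisms of X. Then the set of points that are minimal for the ℤ-action generated by T alone is dense in X. -/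
variable {X : Type*} [MetricSpace X] [CompactSpace X]

/-- A set is invariant under the ℤ-action generated by the homeomorphism T. -/
def InvariantT (T : X ≃ₜ X) (K : Set X) : Prop :=
  (∀ y ∈ K, T y ∈ K) ∧ (∀ y ∈ K, T.symm y ∈ K)

/-- A minimal subset for the ℤ-action generated by T. -/
def IsMinimalT (T : X ≃ₜ X) (K : Set X) : Prop :=
  K.Nonempty ∧ IsClosed K ∧ InvariantT T K ∧
    ∀ K' ⊆ K, K'.Nonempty → IsClosed K' → InvariantT T K' → K' = K

/-- x is a minimal point for T if the T-orbit closure of x is a minimal subsystem. -/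
def IsMinimalPointT (T : X ≃ₜ X) (x : X) : Prop :=
  IsMinimalT T (closure {y : X | ∃ n : ℤ, y = (T.toEquiv ^ n) x})

/-- The full ℤ-orbit of a point. -/
def orbitZ (T : X ≃ₜ X) (x : X) : Set X := {y : X | ∃ n : ℤ, y = (T.toEquiv ^ n) x}

lemma zpow_mem_of_invariant (T : X ≃ₜ X) {K : Set X} (hK : InvariantT T K) :
    ∀ n : ℤ, ∀ y ∈ K, (T.toEquiv ^ n) y ∈ K := by
  intro n
  induction n using Int.induction_on with
  | zero => intro y hy; simpa using hy
  | succ k ih =>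
    intro y hy
    have : ((k : ℤ) + 1) = 1 + (k : ℤ) := by ring
    rw [this, zpow_add, Equiv.Perm.mul_apply, zpow_one]
    exact hK.1 _ (ih y hy)
  | pred k ih =>
    intro y hy
    have : (-(k : ℤ) - 1) = -1 + (-(k : ℤ)) := by ring
    rw [this, zpow_add, Equiv.Perm.mul_apply, zpow_neg_one]
    exact hK.2 _ (ih y hy)

lemma symm_comm_of_comm (T R : X ≃ₜ X) (hRT : ∀ y : X, T (R y) = R (T y)) :
    ∀ y : X, T (R.symm y) = R.symm (T y) := by
  intro y
  have := hRT (R.symm y)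
  rw [R.apply_symm_apply] at this
  rw [this, R.symm_apply_apply]

lemma zpow_comm_of_comm (T R : X ≃ₜ X) (hRT : ∀ y : X, T (R y) = R (T y)) :
    ∀ n : ℤ, ∀ y : X, (T.toEquiv ^ n) (R y) = R ((T.toEquiv ^ n) y) := by
  have hsymm : ∀ y : X, T.symm (R y) = R (T.symm y) := by
    intro y
    exact (symm_comm_of_comm R T (fun z => (hRT z).symm) y).symm
  intro n
  induction n using Int.induction_on with
  | zero => intro y; simp
  | succ k ih =>
    intro y
    have h1 : ((k : ℤ) + 1) = (k : ℤ) + 1 := rfl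
    rw [zpow_add, zpow_one, Equiv.Perm.mul_apply, Equiv.Perm.mul_apply]
    have : (T.toEquiv) (R y) = R (T.toEquiv y) := hRT y
    rw [show (T.toEquiv) (R y) = R (T y) from hRT y, ih (T y)]
    rfl
  | pred k ih =>
    intro y
    rw [show (-(k : ℤ) - 1) = (-(k:ℤ)) + (-1) by ring]
    rw [zpow_add, Equiv.Perm.mul_apply, Equiv.Perm.mul_apply, zpow_neg_one]
    have : (T.toEquiv)⁻¹ (R y) = R ((T.toEquiv)⁻¹ y) := hsymm y
    rw [this, ih]

lemma invariantT_closure_orbit (T : X ≃ₜ X) (x : X) :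
    InvariantT T (closure (orbitZ T x)) := by
  have horb : ∀ R : X ≃ₜ X, (∀ y : X, ∀ n : ℤ, R ((T.toEquiv ^ n) y) = (T.toEquiv ^ n) (R y)) →
      Set.MapsTo R (orbitZ T x) (orbitZ T x) → True := fun _ _ _ => trivial
  constructor
  · intro y hy
    refine map_mem_closure T.continuous hy ?_
    rintro z ⟨n, rfl⟩
    refine ⟨1 + n, ?_⟩
    rw [zpow_add, Equiv.Perm.mul_apply, zpow_one]
    rfl
  · intro y hy
    refine map_mem_closure T.symm.continuous hy ?_
    rintro z ⟨n, rfl⟩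
    refine ⟨-1 + n, ?_⟩
    rw [zpow_add, Equiv.Perm.mul_apply, zpow_neg_one]
    rfl

lemma isMinimalPointT_of_mem (T : X ≃ₜ X) {K : Set X} (hK : IsMinimalT T K)
    {x : X} (hx : x ∈ K) : IsMinimalPointT T x := by
  have horb : orbitZ T x ⊆ K := by
    rintro z ⟨n, rfl⟩
    exact zpow_mem_of_invariant T hK.2.2.1 n x hx
  have hsub : closure (orbitZ T x) ⊆ K := closure_minimal horb hK.2.1
  have hxc : x ∈ closure (orbitZ T x) :=
    subset_closure ⟨0, by simp⟩
  have heq : closure (orbitZ T x) = K :=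
    hK.2.2.2 _ hsub ⟨x, hxc⟩ isClosed_closure (invariantT_closure_orbit T x)
  show IsMinimalT T (closure (orbitZ T x))
  rw [heq]; exact heq ▸ hK

lemma isMinimalT_image (T R : X ≃ₜ X) (hRT : ∀ y : X, T (R y) = R (T y))
    {K : Set X} (hK : IsMinimalT T K) : IsMinimalT T (R '' K) := by
  have hRT' : ∀ y : X, T (R.symm y) = R.symm (T y) := symm_comm_of_comm T R hRT
  have hTsymm : ∀ y : X, T.symm (R y) = R (T.symm y) :=
    fun y => (symm_comm_of_comm R T (fun z => (hRT z).symm) y).symm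
  have hTsymm' : ∀ y : X, T.symm (R.symm y) = R.symm (T.symm y) :=
    fun y => (symm_comm_of_comm R.symm T (fun z => (hRT' z).symm) y).symm
  refine ⟨hK.1.image R, (R.isClosed_image).2 hK.2.1, ⟨?_, ?_⟩, ?_⟩
  · rintro _ ⟨y, hy, rfl⟩
    exact ⟨T y, hK.2.2.1.1 y hy, (hRT y).symm⟩
  · rintro _ ⟨y, hy, rfl⟩
    exact ⟨T.symm y, hK.2.2.1.2 y hy, (hTsymm y).symm⟩
  · intro K' hK' hne hcl hinv
    have hsub : R.symm '' K' ⊆ K := by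
      rintro _ ⟨z, hz, rfl⟩
      obtain ⟨y, hy, rfl⟩ := hK' hz
      simpa using hy
    have hinv' : InvariantT T (R.symm '' K') := by
      constructor
      · rintro _ ⟨z, hz, rfl⟩
        exact ⟨T z, hinv.1 z hz, (hRT' z).symm⟩
      · rintro _ ⟨z, hz, rfl⟩
        exact ⟨T.symm z, hinv.2 z hz, (hTsymm' z).symm⟩
    have := hK.2.2.2 _ hsub (hne.image R.symm) ((R.symm.isClosed_image).2 hcl) hinv'
    have : R '' (R.symm '' K') = R '' K := by rw [this]
    rwa [← Set.image_comp, show (⇑R ∘ ⇑R.symm) = id from funext fun z => R.apply_symm_apply z,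
      Set.image_id] at this

lemma exists_isMinimalT (T : X ≃ₜ X) [Nonempty X] : ∃ K : Set X, IsMinimalT T K := by
  set 𝒮 : Set (Set X) := {K | K.Nonempty ∧ IsClosed K ∧ InvariantT T K} with h𝒮
  have hcond : ∀ c ⊆ 𝒮, IsChain (· ⊆ ·) c → c.Nonempty →
      ∃ lb ∈ 𝒮, ∀ s ∈ c, lb ⊆ s := by
    intro c hc hchain hcne
    refine ⟨⋂₀ c, ⟨?_, ?_, ?_, ?_⟩, fun s hs => Set.sInter_subset_of_mem hs⟩
    · haveI : Nonempty c := hcne.to_subtype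
      have hdir : DirectedOn (· ⊇ ·) c := by
        intro a ha b hb
        rcases eq_or_ne a b with rfl | hne
        · exact ⟨a, ha, subset_rfl, subset_rfl⟩
        · rcases hchain ha hb hne with h | h
          · exact ⟨a, ha, subset_rfl, h⟩
          · exact ⟨b, hb, h, subset_rfl⟩
      exact IsCompact.nonempty_sInter_of_directed_nonempty_isCompact_isClosed
        hdir (fun s hs => (hc hs).1)
        (fun s hs => (hc hs).2.1.isCompact) (fun s hs => (hc hs).2.1)
    · exact isClosed_sInter fun s hs => (hc hs).2.1
    · intro y hy
      exact fun s hs => (hc hs).2.2.1 y (hy s hs)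
    · intro y hy
      exact fun s hs => (hc hs).2.2.2 y (hy s hs)
  obtain ⟨m, -, hm⟩ := zorn_superset_nonempty 𝒮 hcond Set.univ
    ⟨Set.univ_nonempty, isClosed_univ, by constructor <;> intro y _ <;> trivial⟩
  refine ⟨m, hm.1.1, hm.1.2.1, hm.1.2.2, ?_⟩
  intro K' hK' hne hcl hinv
  exact subset_antisymm hK' (hm.2 ⟨hne, hcl, hinv⟩ hK')

lemma isMinimalPointT_comm (T R : X ≃ₜ X) (hRT : ∀ y : X, T (R y) = R (T y))
    {x : X} (hx : IsMinimalPointT T x) : IsMinimalPointT T (R x) := by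
  have horb : orbitZ T (R x) = R '' orbitZ T x := by
    ext y
    constructor
    · rintro ⟨n, rfl⟩
      exact ⟨(T.toEquiv ^ n) x, ⟨n, rfl⟩, (zpow_comm_of_comm T R hRT n x).symm⟩
    · rintro ⟨_, ⟨n, rfl⟩, rfl⟩
      exact ⟨n, (zpow_comm_of_comm T R hRT n x).symm⟩
  show IsMinimalT T (closure (orbitZ T (R x)))
  rw [horb, ← R.image_closure]
  exact isMinimalT_image T R hRT hx

/-- In a minimal ℤ²-system generated by commuting homeomorphisms T and S, the set of
points minimal for the ℤ-action of T alone is dense. -/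
theorem dense_minimal_points_of_commuting (T S : X ≃ₜ X)
    (hcomm : ∀ y : X, T (S y) = S (T y))
    (hmin : IsMinimal2 T S (Set.univ : Set X)) :
    Dense {x : X | IsMinimalPointT T x} := by
  haveI : Nonempty X := hmin.1.to_subtype.map Subtype.val
  set D : Set X := {x | IsMinimalPointT T x} with hD
  have hmapsT : Set.MapsTo T D D := fun x hx =>
    isMinimalPointT_comm T T (fun _ => rfl) hx
  have hmapsTsymm : Set.MapsTo T.symm D D := fun x hx =>
    isMinimalPointT_comm T T.symm (fun y => by simp) hx
  have hmapsS : Set.MapsTo S D D := fun x hx =>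
    isMinimalPointT_comm T S hcomm hx
  have hmapsSsymm : Set.MapsTo S.symm D D := fun x hx =>
    isMinimalPointT_comm T S.symm (symm_comm_of_comm T S hcomm) hx
  have hne : D.Nonempty := by
    obtain ⟨K, hK⟩ := exists_isMinimalT T
    exact ⟨hK.1.some, isMinimalPointT_of_mem T hK hK.1.some_mem⟩
  have hclosed : closure D = Set.univ := by
    refine hmin.2.2.2 (closure D) (Set.subset_univ _) (hne.mono subset_closure)
      isClosed_closure ⟨?_, ?_, ?_, ?_⟩
    · exact fun y hy => map_mem_closure T.continuous hy hmapsT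
    · exact fun y hy => map_mem_closure T.symm.continuous hy hmapsTsymm
    · exact fun y hy => map_mem_closure S.continuous hy hmapsS
    · exact fun y hy => map_mem_closure S.symm.continuous hy hmapsSsymm
  rw [dense_iff_closure_eq]
  exact hclosed
end

section
/- Define words A_1 = "1" and A_{n+1} = A_n 0^{b_n} A_n 0^{n} A_n, where b_n > 15·|A_n| and 0^{k} denotes k zeros. Let x = lim_{n→∞} A_n^∞ be the one-sided sequence obtained as the limit (each A_{n+1} begins with A_n), and let X be the orbit closure of x under the one-sided shift T. Then (X,T) is strongly mixing: for all nonempty open U,V ⊆ X, the set N(U,V) = {n : U ∩ T^{-n}V ≠ ∅} is cofinite in ℕ. -/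
/-- The one-sided shift on binary sequences. -/
def shiftN (y : ℕ → Bool) : ℕ → Bool := fun n => y (n + 1)

/-- The forward orbit of a point under the one-sided shift. -/
def orbitN (x : ℕ → Bool) : Set (ℕ → Bool) :=
  {y | ∃ k : ℕ, y = fun n => x (n + k)}

lemma shiftN_iterate (y : ℕ → Bool) (n : ℕ) : shiftN^[n] y = fun s => y (s + n) := by
  induction n with
  | zero => funext s; simp
  | succ n ih =>
    rw [Function.iterate_succ_apply', ih]
    funext s
    show y (s + 1 + n) = y (s + (n + 1))
    congr 1
    omega

lemma open_cyl {U : Set (ℕ → Bool)} (hU : IsOpen U) {u : ℕ → Bool} (hu : u ∈ U) :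
    ∃ r : ℕ, ∀ z : ℕ → Bool, (∀ s, s < r → z s = u s) → z ∈ U := by
  rw [isOpen_pi_iff] at hU
  obtain ⟨I, w, hw, hsub⟩ := hU u hu
  refine ⟨(I.sup id) + 1, fun z hz => hsub ?_⟩
  intro i hi
  have hz' : z i = u i := hz i (Nat.lt_succ_of_le (Finset.le_sup (f := id) hi))
  rw [hz']
  exact (hw i hi).2

lemma closure_approx {x u : ℕ → Bool} (hu : u ∈ closure (orbitN x)) (r : ℕ) :
    ∃ k : ℕ, ∀ s, s < r → x (s + k) = u s := by
  have hO : IsOpen {z : ℕ → Bool | ∀ s, s < r → z s = u s} := by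
    have he : {z : ℕ → Bool | ∀ s, s < r → z s = u s}
        = Set.pi ↑(Finset.range r) (fun s => {u s}) := by
      ext z; simp [Set.mem_pi]
    rw [he]
    exact isOpen_set_pi (Finset.range r).finite_toSet (fun i _ => isOpen_discrete _)
  obtain ⟨y, hy1, k, rfl⟩ := mem_closure_iff.mp hu _ hO (fun s _ => rfl)
  exact ⟨k, fun s hs => (hy1 s hs)⟩

section Words

variable (A : ℕ → List Bool) (b : ℕ → ℕ)
variable (hArec : ∀ n : ℕ, 1 ≤ n →
      A (n + 1) = A n ++ List.replicate (b n) false ++ A n ++ List.replicate n false ++ A n)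

include hArec

lemma A_prefix : ∀ m M : ℕ, 1 ≤ m → m ≤ M → A m <+: A M := by
  intro m M hm hmM
  induction M, hmM using Nat.le_induction with
  | base => exact List.prefix_rfl
  | succ M hM ih =>
    refine ih.trans ?_
    rw [hArec M (hm.trans hM)]
    exact ((List.prefix_append _ _).trans ((List.prefix_append _ _).trans
      ((List.prefix_append _ _).trans (List.prefix_append _ _))))

lemma A_suffix : ∀ m M : ℕ, 1 ≤ m → m ≤ M → A m <:+ A M := by
  intro m M hm hmM
  induction M, hmM using Nat.le_induction with
  | base => exact List.suffix_rfl
  | succ M hM ih =>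
    refine ih.trans ?_
    rw [hArec M (hm.trans hM)]
    exact List.suffix_append _ _

lemma A_length (hA1 : A 1 = [true]) : ∀ n : ℕ, 1 ≤ n → n ≤ (A n).length ∧ 1 ≤ (A n).length := by
  intro n hn
  induction n, hn using Nat.le_induction with
  | base => simp [hA1]
  | succ n hn ih =>
    rw [hArec n hn]
    simp only [List.length_append, List.length_replicate]
    omega

lemma occurrence (hA1 : A 1 = [true]) (x : ℕ → Bool)
    (hx : ∀ n : ℕ, 1 ≤ n → ∀ k : ℕ, k < (A n).length → x k = (A n).getD k false)
    (m K : ℕ) (hm : 1 ≤ m) (hK : m ≤ K) :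
    ∃ t : ℕ, ∀ d, d < 2 * (A m).length + K →
      x (t + d) = ((A m ++ List.replicate K false) ++ A m).getD d false := by
  have hK1 : 1 ≤ K := hm.trans hK
  obtain ⟨P, hP⟩ := A_suffix A b hArec m K hm hK
  obtain ⟨Q, hQ⟩ := A_prefix A b hArec m K hm hK
  set W : List Bool := (A m ++ List.replicate K false) ++ A m with hW
  set E : List Bool := (A K ++ List.replicate (b K) false) ++ P with hE
  have key : E ++ (W ++ Q) = A K ++ List.replicate (b K) false ++ (P ++ A m)
      ++ List.replicate K false ++ (A m ++ Q) := by
    simp [hE, hW, List.append_assoc]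
  have hsplit : A (K + 1) = E ++ (W ++ Q) := by
    rw [hArec K hK1, key, hP, hQ]
  refine ⟨E.length, fun d hd => ?_⟩
  have hWlen : W.length = 2 * (A m).length + K := by
    simp only [hW, List.length_append, List.length_replicate]; omega
  have hlt : E.length + d < (A (K + 1)).length := by
    rw [hsplit]
    simp only [List.length_append]
    omega
  rw [hx (K + 1) (by omega) _ hlt, hsplit,
    List.getD_append_right _ _ _ _ (Nat.le_add_right _ _)]
  rw [Nat.add_sub_cancel_left]
  exact List.getD_append _ _ _ _ (by omega)

end Words

/-- For the word construction A₁ = 1, A_{n+1} = A_n 0^{b_n} A_n 0^{n} A_n with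
b_n > 15|A_n| and x = lim A_n^∞, the orbit closure (X,T) is strongly mixing:
for all nonempty (relatively) open U,V the hitting set N(U,V) is cofinite. -/
theorem strong_mixing_of_construction (A : ℕ → List Bool) (b : ℕ → ℕ)
    (hA1 : A 1 = [true])
    (hArec : ∀ n : ℕ, 1 ≤ n →
      A (n + 1) = A n ++ List.replicate (b n) false ++ A n ++ List.replicate n false ++ A n)
    (hb : ∀ n : ℕ, 1 ≤ n → b n > 15 * (A n).length)
    (x : ℕ → Bool)
    (hx : ∀ n : ℕ, 1 ≤ n → ∀ k : ℕ, k < (A n).length → x k = (A n).getD k false) :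
    ∀ U V : Set (ℕ → Bool), IsOpen U → IsOpen V →
      (closure (orbitN x) ∩ U).Nonempty → (closure (orbitN x) ∩ V).Nonempty →
      ∃ N : ℕ, ∀ n : ℕ, N ≤ n →
        ∃ z ∈ closure (orbitN x), z ∈ U ∧ shiftN^[n] z ∈ V := by
  intro U V hUopen hVopen ⟨u, huX, huU⟩ ⟨v, hvX, hvV⟩
  obtain ⟨r, hr⟩ := open_cyl hUopen huU
  obtain ⟨r', hr'⟩ := open_cyl hVopen hvV
  obtain ⟨k, hk⟩ := closure_approx huX r
  obtain ⟨k', hk'⟩ := closure_approx hvX r'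
  -- choose m
  set m : ℕ := max (max (k + r) (k' + r')) 1 with hm
  have hm1 : 1 ≤ m := le_max_right _ _
  have hLm : m ≤ (A m).length := (A_length A b hArec hA1 m hm1).1
  set L : ℕ := (A m).length with hL
  have hkr : k + r ≤ L := le_trans (le_trans (le_max_left _ _) (le_max_left _ _)) hLm
  have hkr' : k' + r' ≤ L := le_trans (le_trans (le_max_right _ _) (le_max_left _ _)) hLm
  refine ⟨L + k' + m, fun n hn => ?_⟩
  set K : ℕ := n + k - (L + k') with hKdef
  have hKm : m ≤ K := by omega
  have hnk : n + k = L + K + k' := by omega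
  obtain ⟨t, ht⟩ := occurrence A b hArec hA1 x hx m K hm1 hKm
  refine ⟨fun s => x (s + (t + k)), subset_closure ⟨t + k, rfl⟩, ?_, ?_⟩
  · apply hr
    intro s hs
    have h1 : s + (t + k) = t + (k + s) := by omega
    have h2 := ht (k + s) (by omega)
    rw [h1, h2, List.getD_append _ _ _ _ (by simp only [List.length_append, List.length_replicate]; omega),
      List.getD_append _ _ _ _ (by omega)]
    rw [← hx m hm1 (k + s) (by omega), ← hk s hs]
    congr 1
    omega
  · rw [shiftN_iterate]
    apply hr'
    intro s hs
    show x (s + n + (t + k)) = v s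
    have h1 : s + n + (t + k) = t + (L + K + (k' + s)) := by omega
    have h2 := ht (L + K + (k' + s)) (by omega)
    rw [h1, h2, List.getD_append_right _ _ _ _ (by simp only [List.length_append, List.length_replicate]; omega)]
    have h3 : L + K + (k' + s) - (A m ++ List.replicate K false).length = k' + s := by
      simp only [List.length_append, List.length_replicate]; omega
    rw [h3, ← hx m hm1 (k' + s) (by omega), ← hk' s hs]
    congr 1
    omega
end

section
/- In the sequence x constructed by A_1 = "1", A_{n+1} = A_n 0^{b_n} A_n 0^{n} A_n with b_n > 15·|A_n| and x = lim A_n^∞, for every fixed n, the word A_n 0^{m} A_n occurs in x for all m ≥ n. Hence for the orbit closure X of x under the shift T, the return-time set N([A_n],[A_n]) = {k : [A_n] ∩ T^{-k}[A_n] ≠ ∅} is cofinite. -/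
/-- A word w occurs in x at place j. -/
def OccursAt (w : List Bool) (x : ℕ → Bool) (j : ℕ) : Prop :=
  ∀ k : ℕ, k < w.length → x (j + k) = w.getD k false

lemma shiftN_iter (y : ℕ → Bool) (k : ℕ) : shiftN^[k] y = fun n => y (n + k) := by
  induction k generalizing y with
  | zero => rfl
  | succ k ih =>
    rw [Function.iterate_succ_apply, ih]
    funext n
    simp [shiftN, Nat.add_assoc, Nat.add_comm 1 k]

lemma getD_middle (u w v : List Bool) (k : ℕ) (hk : k < w.length) :
    (u ++ (w ++ v)).getD (u.length + k) false = w.getD k false := by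
  rw [List.getD_append_right _ _ _ _ (Nat.le_add_right _ _), Nat.add_sub_cancel_left,
    List.getD_append _ _ _ _ hk]

/-- For the word construction A₁ = 1, A_{n+1} = A_n 0^{b_n} A_n 0^{n} A_n with
b_n > 15|A_n| and x = lim A_n^∞: for each n, the word A_n 0^m A_n occurs in x for
every m ≥ n, and hence the return-time set N([A_n],[A_n]) for the orbit closure X
is cofinite. -/
theorem return_times_cofinite_of_construction (A : ℕ → List Bool) (b : ℕ → ℕ)
    (hA1 : A 1 = [true])
    (hArec : ∀ n : ℕ, 1 ≤ n →
      A (n + 1) = A n ++ List.replicate (b n) false ++ A n ++ List.replicate n false ++ A n)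
    (hb : ∀ n : ℕ, 1 ≤ n → b n > 15 * (A n).length)
    (x : ℕ → Bool)
    (hx : ∀ n : ℕ, 1 ≤ n → ∀ k : ℕ, k < (A n).length → x k = (A n).getD k false) :
    (∀ n : ℕ, 1 ≤ n → ∀ m : ℕ, n ≤ m →
      ∃ j : ℕ, OccursAt (A n ++ List.replicate m false ++ A n) x j) ∧
    (∀ n : ℕ, 1 ≤ n → {k : ℕ | ¬ ∃ z ∈ closure (orbitN x),
        OccursAt (A n) z 0 ∧ OccursAt (A n) (shiftN^[k] z) 0}.Finite) := by
  -- A n is both prefix and suffix of A m for n ≤ m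
  have hps : ∀ n : ℕ, 1 ≤ n → ∀ m : ℕ, n ≤ m → (A n <+: A m) ∧ (A n <:+ A m) := by
    intro n hn m hm
    induction m with
    | zero => omega
    | succ m ih =>
      rcases Nat.lt_or_ge n (m + 1) with h | h
      · have hm1 : 1 ≤ m := by omega
        obtain ⟨⟨s, hs⟩, ⟨t, ht⟩⟩ := ih (by omega)
        rw [hArec m hm1]
        constructor
        · exact ⟨s ++ (List.replicate (b m) false ++ A m ++ List.replicate m false ++ A m),
            by rw [← hs]; simp [List.append_assoc]⟩
        · exact ⟨A m ++ List.replicate (b m) false ++ A m ++ List.replicate m false ++ t,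
            by rw [← ht]; simp [List.append_assoc]⟩
      · have : n = m + 1 := by omega
        subst this
        exact ⟨List.prefix_refl _, List.suffix_refl _⟩
  -- main occurrence statement
  have main : ∀ n : ℕ, 1 ≤ n → ∀ m : ℕ, n ≤ m →
      ∃ j : ℕ, OccursAt (A n ++ List.replicate m false ++ A n) x j := by
    intro n hn m hm
    have hm1 : 1 ≤ m := le_trans hn hm
    obtain ⟨⟨s, hs⟩, ⟨t, ht⟩⟩ := hps n hn m hm
    set u : List Bool := A m ++ List.replicate (b m) false ++ t with hu
    set w : List Bool := A n ++ List.replicate m false ++ A n with hw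
    have hdecomp : A (m + 1) = u ++ (w ++ s) := by
      rw [hArec m hm1]
      rw [show A m ++ List.replicate (b m) false ++ A m ++ List.replicate m false ++ A m
          = A m ++ List.replicate (b m) false ++ (t ++ A n) ++ List.replicate m false
            ++ (A n ++ s) from by rw [ht, hs]]
      simp [hu, hw, List.append_assoc]
    refine ⟨u.length, fun k hk => ?_⟩
    have hkw : k < w.length := hk
    have hlen : u.length + k < (A (m + 1)).length := by
      rw [hdecomp]; simp only [List.length_append]; omega
    rw [hx (m + 1) (by omega) _ hlen, hdecomp, getD_middle u w s k hkw]
  refine ⟨main, ?_⟩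
  intro n hn
  apply Set.Finite.subset (Set.finite_Iio ((A n).length + n))
  intro k hk
  by_contra hklt
  apply hk
  simp only [Set.mem_Iio, not_lt] at hklt
  set m : ℕ := k - (A n).length with hm
  have hkeq : k = (A n).length + m := by omega
  have hnm : n ≤ m := by omega
  obtain ⟨j, hj⟩ := main n hn m hnm
  refine ⟨fun i => x (i + j), subset_closure ⟨j, rfl⟩, ?_, ?_⟩
  · intro k' hk'
    have := hj k' (by simp only [List.length_append]; omega)
    show x (0 + k' + j) = (A n).getD k' false
    rw [Nat.zero_add, Nat.add_comm k' j, this,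
      List.getD_append _ _ _ _ (by simp only [List.length_append]; omega),
      List.getD_append _ _ _ _ hk']
  · intro k' hk'
    rw [shiftN_iter]
    have hidx : (A n).length + m + k' <
        (A n ++ List.replicate m false ++ A n).length := by
      simp only [List.length_append, List.length_replicate]; omega
    have := hj ((A n).length + m + k') hidx
    have e1 : 0 + k' + k + j = j + ((A n).length + m + k') := by omega
    show x (0 + k' + k + j) = (A n).getD k' false
    rw [e1, this, List.getD_append_right _ _ _ _
      (by simp only [List.length_append, List.length_replicate]; omega)]
    congr 1
    simp only [List.length_append, List.length_replicate]
    omega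
end
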